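/- Let S be a set of primes, let χ : ℕ → ℝ be a multiplicative function taking values in {0,1} that is characteristic on S, and let A = {n ∈ ℕ : χ(n) = 1}. If A has a Dedekind-Dirichlet density δ(A) with δ(A) ≠ 0, then S has Dirichlet density 1. -/

import Mathlib

open Filter Topology

private lemma log_one_add_lb {x : ℝ} (hx : 0 ≤ x) : x - x ^ 2 ≤ Real.log (1 + x) := by
  have h1 : (0:ℝ) < 1 + x := by linarith
  have h := Real.log_le_sub_one_of_pos (show (0:ℝ) < (1 + x)⁻¹ by positivity)
  rw [Real.log_inv] at h
  have h3 : x / (1 + x) ≤ Real.log (1 + x) := by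
    have h2 : (1 + x)⁻¹ - 1 = -(x / (1 + x)) := by field_simp; ring
    rw [h2] at h
    linarith
  refine le_trans ?_ h3
  rw [le_div_iff₀ h1]
  nlinarith

private lemma hasSum_log_of_hasProd {ι : Type*} {f : ι → ℝ} {a : ℝ}
    (hf : ∀ i, 0 < f i) (ha : 0 < a) (h : HasProd f a) :
    HasSum (fun i => Real.log (f i)) (Real.log a) := by
  have hc : Tendsto (fun s : Finset ι => Real.log (∏ i ∈ s, f i)) atTop (𝓝 (Real.log a)) :=
    ((Real.continuousAt_log ha.ne').tendsto).comp h
  exact hc.congr fun s => Real.log_prod fun i _ => (hf i).ne'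

set_option maxHeartbeats 1000000 in
/-- Let `S` be a set of primes, `χ : ℕ → ℝ` a multiplicative function with
values in `{0,1}` that is characteristic on `S`, and `A = {n | χ n = 1}`. If `A` has a nonzero
Dedekind-Dirichlet density, then `S` has Dirichlet density `1`. -/
theorem dirichlet_density_one_of_dedekind_density_ne_zero
    (S : Set ℕ) (hS : ∀ p ∈ S, Nat.Prime p)
    (χ : ℕ → ℝ) (hχ1 : χ 1 = 1)
    (hχmul : ∀ m n : ℕ, Nat.Coprime m n → χ (m * n) = χ m * χ n)
    (hχval : ∀ n : ℕ, χ n = 0 ∨ χ n = 1)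
    (hchar : ∀ p : ℕ, Nat.Prime p → (χ p = 1 ↔ p ∈ S))
    (δA : ℝ) (hδA : δA ≠ 0)
    (hA : Tendsto (fun z : ℝ => (z - 1) * ∑' n : {n : ℕ | χ n = 1}, ((n : ℕ) : ℝ) ^ (-z))
      (𝓝[>] 1) (𝓝 δA)) :
    Tendsto (fun z : ℝ => (∑' p : S, ((p : ℕ) : ℝ) ^ (-z)) / Real.log (1 / (z - 1)))
      (𝓝[>] 1) (𝓝 1) := by
  have hχ0 : ∀ n, 0 ≤ χ n := fun n => by rcases hχval n with h | h <;> simp [h]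
  have hχle1 : ∀ n, χ n ≤ 1 := fun n => by rcases hχval n with h | h <;> simp [h]
  set F : ℝ → ℝ := fun z => ∑' n : ℕ, χ n * (n : ℝ) ^ (-z) with hFdef
  set P : ℝ → ℝ := fun z => ∑' p : S, ((p : ℕ) : ℝ) ^ (-z) with hPdef
  set L : ℝ → ℝ := fun z => Real.log (1 / (z - 1)) with hLdef
  set K : ℝ := ∑' n : ℕ, (n : ℝ) ^ (-2 : ℝ) with hKdef
  have hKsum : Summable (fun n : ℕ => (n : ℝ) ^ (-2 : ℝ)) :=
    Real.summable_nat_rpow.mpr (by norm_num)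
  have hK0 : 0 ≤ K := tsum_nonneg fun n => Real.rpow_nonneg n.cast_nonneg _
  -- `G z = F z`
  have hGF : ∀ z : ℝ, (∑' n : {n : ℕ | χ n = 1}, ((n : ℕ) : ℝ) ^ (-z)) = F z := by
    intro z
    rw [hFdef]
    rw [tsum_subtype {n : ℕ | χ n = 1} (fun n : ℕ => (n : ℝ) ^ (-z))]
    refine tsum_congr fun n => ?_
    by_cases h : χ n = 1
    · rw [Set.indicator_of_mem (show n ∈ {n : ℕ | χ n = 1} from h), h, one_mul]
    · rw [Set.indicator_of_notMem (show n ∉ {n : ℕ | χ n = 1} from h),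
        (hχval n).resolve_right h, zero_mul]
  -- main per-`z` estimates
  have key : ∀ z : ℝ, 1 < z → 1 ≤ F z ∧ |P z - Real.log (F z)| ≤ 2 * K := by
    intro z hz
    have hzne : (-z : ℝ) ≠ 0 := by linarith
    have hsum0 : Summable (fun n : ℕ => (n : ℝ) ^ (-z)) :=
      Real.summable_nat_rpow.mpr (by linarith)
    have hfnn : ∀ n : ℕ, 0 ≤ χ n * (n : ℝ) ^ (-z) :=
      fun n => mul_nonneg (hχ0 n) (Real.rpow_nonneg n.cast_nonneg _)
    have hfle : ∀ n : ℕ, χ n * (n : ℝ) ^ (-z) ≤ (n : ℝ) ^ (-z) := by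
      intro n
      nth_rewrite 2 [← one_mul ((n : ℝ) ^ (-z))]
      exact mul_le_mul_of_nonneg_right (hχle1 n) (Real.rpow_nonneg n.cast_nonneg _)
    have hsumf : Summable (fun n : ℕ => χ n * (n : ℝ) ^ (-z)) :=
      hsum0.of_nonneg_of_le hfnn hfle
    have hsumnorm : Summable (fun n : ℕ => ‖χ n * (n : ℝ) ^ (-z)‖) :=
      hsumf.congr fun n => (Real.norm_of_nonneg (hfnn n)).symm
    have hf1 : χ 1 * ((1 : ℕ) : ℝ) ^ (-z) = 1 := by
      rw [hχ1, Nat.cast_one, Real.one_rpow, one_mul]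
    have hf0 : χ 0 * ((0 : ℕ) : ℝ) ^ (-z) = 0 := by
      rw [Nat.cast_zero, Real.zero_rpow hzne, mul_zero]
    have hmulz : ∀ {m n : ℕ}, Nat.Coprime m n →
        χ (m * n) * ((m * n : ℕ) : ℝ) ^ (-z)
          = (χ m * (m : ℝ) ^ (-z)) * (χ n * (n : ℝ) ^ (-z)) := by
      intro m n hmn
      rw [hχmul m n hmn, Nat.cast_mul, Real.mul_rpow m.cast_nonneg n.cast_nonneg]
      ring
    have hprod : HasProd (fun p : Nat.Primes => ∑' e : ℕ, χ ((p : ℕ) ^ e) * (((p : ℕ) ^ e : ℕ) : ℝ) ^ (-z)) (F z) :=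
      EulerProduct.eulerProduct_hasProd hf1 hmulz hsumnorm hf0
    have hF1 : 1 ≤ F z := by
      have := hsumf.le_tsum 1 fun j _ => hfnn j
      rwa [hf1] at this
    have hFpos : 0 < F z := lt_of_lt_of_le one_pos hF1
    -- notation for Euler factors
    set r : Nat.Primes → ℝ := fun p => ((p : ℕ) : ℝ) ^ (-z) with hrdef
    set E : Nat.Primes → ℝ := fun p => ∑' e : ℕ, χ ((p : ℕ) ^ e) * (((p : ℕ) ^ e : ℕ) : ℝ) ^ (-z) with hEdef
    -- facts about r p
    have hp1 : ∀ p : Nat.Primes, (1 : ℝ) ≤ ((p : ℕ) : ℝ) := by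
      intro p; exact_mod_cast p.prop.one_lt.le
    have hp2 : ∀ p : Nat.Primes, (2 : ℝ) ≤ ((p : ℕ) : ℝ) := by
      intro p; exact_mod_cast p.prop.two_le
    have hrpos : ∀ p : Nat.Primes, 0 < r p := fun p =>
      Real.rpow_pos_of_pos (lt_of_lt_of_le one_pos (hp1 p)) _
    have hrle : ∀ p : Nat.Primes, r p ≤ 1 / 2 := by
      intro p
      have h2z : (2 : ℝ) ≤ ((p : ℕ) : ℝ) ^ z := by
        calc (2 : ℝ) = 2 ^ (1 : ℝ) := (Real.rpow_one 2).symm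
          _ ≤ 2 ^ z := Real.rpow_le_rpow_of_exponent_le one_le_two hz.le
          _ ≤ ((p : ℕ) : ℝ) ^ z := Real.rpow_le_rpow (by norm_num) (hp2 p) (by linarith)
      rw [hrdef]
      show ((p : ℕ) : ℝ) ^ (-z) ≤ 1 / 2
      rw [Real.rpow_neg (by positivity), one_div]
      exact inv_anti₀ (by norm_num) h2z
    -- the Euler factor decomposition
    have hpow : ∀ (p : Nat.Primes) (e : ℕ),
        χ ((p : ℕ) ^ e) * (((p : ℕ) ^ e : ℕ) : ℝ) ^ (-z) = χ ((p : ℕ) ^ e) * (r p) ^ e := by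
      intro p e
      congr 1
      rw [Nat.cast_pow, ← Real.rpow_natCast (((p : ℕ) : ℝ)) e, ← Real.rpow_mul (by positivity),
        mul_comm, Real.rpow_mul (by positivity), Real.rpow_natCast]
    have hsum_e : ∀ p : Nat.Primes, Summable (fun e : ℕ => χ ((p : ℕ) ^ e) * (((p : ℕ) ^ e : ℕ) : ℝ) ^ (-z)) :=
      fun p => hsumf.comp_injective (Nat.pow_right_injective p.prop.two_le)
    have hgeom : ∀ p : Nat.Primes, Summable (fun e : ℕ => (r p) ^ e) :=
      fun p => summable_geometric_of_lt_one (hrpos p).le (by have := hrle p; linarith)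
    -- tail
    have htail : ∀ p : Nat.Primes,
        E p = 1 + χ (p : ℕ) * r p + ∑' e : ℕ, χ ((p : ℕ) ^ (e + 2)) * (((p : ℕ) ^ (e + 2) : ℕ) : ℝ) ^ (-z) := by
      intro p
      rw [hEdef]
      show (∑' e : ℕ, χ ((p : ℕ) ^ e) * (((p : ℕ) ^ e : ℕ) : ℝ) ^ (-z)) = _
      rw [Summable.tsum_eq_zero_add (hsum_e p)]
      rw [Summable.tsum_eq_zero_add ((summable_nat_add_iff 1).mpr (hsum_e p))]
      have e0 : χ ((p : ℕ) ^ 0) * (((p : ℕ) ^ 0 : ℕ) : ℝ) ^ (-z) = 1 := by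
        rw [pow_zero]; exact hf1
      have e1 : χ ((p : ℕ) ^ (0 + 1)) * (((p : ℕ) ^ (0 + 1) : ℕ) : ℝ) ^ (-z) = χ (p : ℕ) * r p := by
        rw [zero_add, pow_one]
      rw [e0, e1]
      have h12 : ∀ e : ℕ, e + 1 + 1 = e + 2 := fun e => by ring
      simp only [h12]
      ring
    have htail_nn : ∀ p : Nat.Primes,
        0 ≤ ∑' e : ℕ, χ ((p : ℕ) ^ (e + 2)) * (((p : ℕ) ^ (e + 2) : ℕ) : ℝ) ^ (-z) :=
      fun p => tsum_nonneg fun e => hfnn _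
    have htail_le : ∀ p : Nat.Primes,
        (∑' e : ℕ, χ ((p : ℕ) ^ (e + 2)) * (((p : ℕ) ^ (e + 2) : ℕ) : ℝ) ^ (-z)) ≤ 2 * (r p) ^ 2 := by
      intro p
      have hsum2 : Summable (fun e : ℕ => (r p) ^ (e + 2)) := (summable_nat_add_iff 2).mpr (hgeom p)
      have step : (∑' e : ℕ, χ ((p : ℕ) ^ (e + 2)) * (((p : ℕ) ^ (e + 2) : ℕ) : ℝ) ^ (-z))
          ≤ ∑' e : ℕ, (r p) ^ (e + 2) := by
        refine Summable.tsum_le_tsum (fun e => ?_) ((summable_nat_add_iff 2).mpr (hsum_e p)) hsum2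
        rw [hpow p (e + 2)]
        nth_rewrite 2 [← one_mul ((r p) ^ (e + 2))]
        exact mul_le_mul_of_nonneg_right (hχle1 _) (pow_nonneg (hrpos p).le _)
      have hval : (∑' e : ℕ, (r p) ^ (e + 2)) = (1 - r p)⁻¹ * (r p) ^ 2 := by
        have : ∀ e : ℕ, (r p) ^ (e + 2) = (r p) ^ e * (r p) ^ 2 := fun e => pow_add _ _ _
        rw [tsum_congr this, tsum_mul_right, tsum_geometric_of_lt_one (hrpos p).le
          (by have := hrle p; linarith)]
      have hinv : (1 - r p)⁻¹ ≤ 2 := by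
        have h1 : (1 : ℝ) / 2 ≤ 1 - r p := by have := hrle p; linarith
        have h2 : (0 : ℝ) < 1 - r p := by have := hrle p; linarith
        rw [inv_le_iff_one_le_mul₀ h2]
        linarith
      calc (∑' e : ℕ, χ ((p : ℕ) ^ (e + 2)) * (((p : ℕ) ^ (e + 2) : ℕ) : ℝ) ^ (-z))
          ≤ (1 - r p)⁻¹ * (r p) ^ 2 := by rw [← hval]; exact step
        _ ≤ 2 * (r p) ^ 2 := mul_le_mul_of_nonneg_right hinv (sq_nonneg _)
    have hxnn : ∀ p : Nat.Primes, 0 ≤ χ (p : ℕ) * r p :=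
      fun p => mul_nonneg (hχ0 _) (hrpos p).le
    have hxle : ∀ p : Nat.Primes, χ (p : ℕ) * r p ≤ r p := by
      intro p
      nth_rewrite 2 [← one_mul (r p)]
      exact mul_le_mul_of_nonneg_right (hχle1 _) (hrpos p).le
    have hEpos : ∀ p : Nat.Primes, 0 < E p := by
      intro p
      rw [htail p]
      have := hxnn p
      have := htail_nn p
      linarith
    -- log bounds
    have hub : ∀ p : Nat.Primes, Real.log (E p) ≤ χ (p : ℕ) * r p + 2 * (r p) ^ 2 := by
      intro p
      have h := Real.log_le_sub_one_of_pos (hEpos p)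
      rw [htail p] at h ⊢
      have := htail_le p
      linarith
    have hlb : ∀ p : Nat.Primes, χ (p : ℕ) * r p - (r p) ^ 2 ≤ Real.log (E p) := by
      intro p
      have h1 : Real.log (1 + χ (p : ℕ) * r p) ≤ Real.log (E p) := by
        refine Real.log_le_log (by have := hxnn p; linarith) ?_
        rw [htail p]
        have := htail_nn p
        linarith
      have h2 : χ (p : ℕ) * r p - (χ (p : ℕ) * r p) ^ 2 ≤ Real.log (1 + χ (p : ℕ) * r p) :=
        log_one_add_lb (hxnn p)
      have h3 : (χ (p : ℕ) * r p) ^ 2 ≤ (r p) ^ 2 := by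
        have := hxnn p; have := hxle p; nlinarith
      linarith
    -- sum of logs
    have hlog : HasSum (fun p : Nat.Primes => Real.log (E p)) (Real.log (F z)) :=
      hasSum_log_of_hasProd hEpos hFpos hprod
    -- summabilities over primes
    have s1 : Summable (fun p : Nat.Primes => χ (p : ℕ) * r p) :=
      hsumf.comp_injective Subtype.val_injective
    have hsq : Summable (fun n : ℕ => ((n : ℝ) ^ (-z)) ^ 2) := by
      refine hsum0.of_nonneg_of_le (fun n => sq_nonneg _) fun n => ?_
      have h0 : 0 ≤ (n : ℝ) ^ (-z) := Real.rpow_nonneg n.cast_nonneg _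
      have h1 : (n : ℝ) ^ (-z) ≤ 1 := by
        rcases Nat.eq_zero_or_pos n with h | h
        · rw [h, Nat.cast_zero, Real.zero_rpow hzne]; norm_num
        · exact Real.rpow_le_one_of_one_le_of_nonpos (by exact_mod_cast h) (by linarith)
      nlinarith
    have s2 : Summable (fun p : Nat.Primes => (r p) ^ 2) :=
      hsq.comp_injective Subtype.val_injective
    -- bound the square sum by K
    have hS2nn : 0 ≤ ∑' p : Nat.Primes, (r p) ^ 2 := tsum_nonneg fun p => sq_nonneg _
    have hS2K : (∑' p : Nat.Primes, (r p) ^ 2) ≤ K := by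
      refine Summable.tsum_le_tsum_of_inj (fun p : Nat.Primes => (p : ℕ)) Subtype.val_injective
        (fun c _ => Real.rpow_nonneg c.cast_nonneg _) (fun p => ?_) s2 hKsum
      have : (r p) ^ 2 = ((p : ℕ) : ℝ) ^ (-z + -z) := by
        rw [sq, hrdef]
        show ((p : ℕ) : ℝ) ^ (-z) * ((p : ℕ) : ℝ) ^ (-z) = _
        rw [← Real.rpow_add (lt_of_lt_of_le one_pos (hp1 p))]
      rw [this]
      exact Real.rpow_le_rpow_of_exponent_le (hp1 p) (by linarith)
    -- P z equals the prime sum of χ p * r p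
    have hPP : P z = ∑' p : Nat.Primes, χ (p : ℕ) * r p := by
      rw [hPdef]
      show (∑' p : S, ((p : ℕ) : ℝ) ^ (-z)) = _
      have e1 : (∑' p : S, ((p : ℕ) : ℝ) ^ (-z))
          = ∑' n : ℕ, S.indicator (fun n : ℕ => (n : ℝ) ^ (-z)) n :=
        tsum_subtype S (fun n : ℕ => (n : ℝ) ^ (-z))
      have e2 : (∑' p : Nat.Primes, χ (p : ℕ) * r p)
          = ∑' n : ℕ, Set.indicator {n : ℕ | Nat.Prime n}
              (fun n : ℕ => χ n * (n : ℝ) ^ (-z)) n :=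
        tsum_subtype {n : ℕ | Nat.Prime n} (fun n : ℕ => χ n * (n : ℝ) ^ (-z))
      rw [e1, e2]
      refine tsum_congr fun n => ?_
      by_cases hn : Nat.Prime n
      · rw [Set.indicator_of_mem (show n ∈ {n : ℕ | Nat.Prime n} from hn)]
        by_cases hnS : n ∈ S
        · rw [Set.indicator_of_mem hnS, (hchar n hn).mpr hnS, one_mul]
        · rw [Set.indicator_of_notMem hnS]
          have : χ n = 0 := by
            rcases hχval n with h | h
            · exact h
            · exact absurd ((hchar n hn).mp h) hnS
          rw [this, zero_mul]
      · rw [Set.indicator_of_notMem (show n ∉ {n : ℕ | Nat.Prime n} from hn),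
          Set.indicator_of_notMem fun hnS => hn (hS n hnS)]
    -- combine
    refine ⟨hF1, ?_⟩
    have hlogsum := hlog.tsum_eq
    have hub' : Real.log (F z) ≤ (∑' p : Nat.Primes, χ (p : ℕ) * r p) + 2 * ∑' p : Nat.Primes, (r p) ^ 2 := by
      rw [← hlogsum]
      calc (∑' p : Nat.Primes, Real.log (E p))
          ≤ ∑' p : Nat.Primes, (χ (p : ℕ) * r p + 2 * (r p) ^ 2) :=
            Summable.tsum_le_tsum hub hlog.summable (s1.add (s2.mul_left 2))
        _ = _ := by rw [Summable.tsum_add s1 (s2.mul_left 2), tsum_mul_left]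
    have hlb' : (∑' p : Nat.Primes, χ (p : ℕ) * r p) - (∑' p : Nat.Primes, (r p) ^ 2) ≤ Real.log (F z) := by
      rw [← hlogsum]
      have : (∑' p : Nat.Primes, (χ (p : ℕ) * r p - (r p) ^ 2)) ≤ ∑' p : Nat.Primes, Real.log (E p) :=
        Summable.tsum_le_tsum hlb (s1.sub s2) hlog.summable
      rwa [Summable.tsum_sub s1 s2] at this
    rw [hPP, abs_le]
    constructor
    · linarith
    · linarith
  -- limit facts
  have hL : Tendsto L (𝓝[>] (1 : ℝ)) atTop := by
    have h1 : Tendsto (fun z : ℝ => z - 1) (𝓝[>] (1 : ℝ)) (𝓝[>] (0 : ℝ)) := by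
      refine tendsto_nhdsWithin_of_tendsto_nhds_of_eventually_within _ ?_ ?_
      · have h : Tendsto (fun z : ℝ => z - 1) (𝓝 (1 : ℝ)) (𝓝 (0 : ℝ)) := by
          have h' := Filter.tendsto_id.sub
            (tendsto_const_nhds : Tendsto (fun _ : ℝ => (1 : ℝ)) (𝓝 (1 : ℝ)) _)
          simpa using h'
        exact h.mono_left nhdsWithin_le_nhds
      · filter_upwards [self_mem_nhdsWithin] with z hz
        exact sub_pos.mpr (Set.mem_Ioi.mp hz)
    have h2 : Tendsto (fun z : ℝ => (z - 1)⁻¹) (𝓝[>] (1 : ℝ)) atTop :=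
      tendsto_inv_nhdsGT_zero.comp h1
    have h3 : Tendsto (fun z : ℝ => 1 / (z - 1)) (𝓝[>] (1 : ℝ)) atTop := by
      simpa [one_div] using h2
    exact Real.tendsto_log_atTop.comp h3
  have hδpos : 0 < δA := by
    have h0 : 0 ≤ δA := by
      refine ge_of_tendsto hA ?_
      filter_upwards [self_mem_nhdsWithin] with z hz
      have h1 : (0 : ℝ) ≤ z - 1 := by simp only [Set.mem_Ioi] at hz; linarith
      exact mul_nonneg h1 (tsum_nonneg fun n => Real.rpow_nonneg (Nat.cast_nonneg _) _)
    exact lt_of_le_of_ne h0 (Ne.symm hδA)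
  have hA' : Tendsto (fun z : ℝ => (z - 1) * F z) (𝓝[>] (1 : ℝ)) (𝓝 δA) :=
    hA.congr fun z => by rw [hGF z]
  have hlogδ : Tendsto (fun z : ℝ => Real.log ((z - 1) * F z)) (𝓝[>] (1 : ℝ))
      (𝓝 (Real.log δA)) :=
    ((Real.continuousAt_log hδpos.ne').tendsto).comp hA'
  have t1 : Tendsto (fun z : ℝ => Real.log ((z - 1) * F z) / L z) (𝓝[>] (1 : ℝ)) (𝓝 0) :=
    hlogδ.div_atTop hL
  have t2 : Tendsto (fun z : ℝ => (P z - Real.log (F z)) / L z) (𝓝[>] (1 : ℝ)) (𝓝 0) := by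
    have ha : Tendsto (fun z : ℝ => 2 * K * (L z)⁻¹) (𝓝[>] (1 : ℝ)) (𝓝 0) := by
      have := hL.inv_tendsto_atTop
      have h := this.const_mul (2 * K)
      simpa using h
    refine squeeze_zero_norm' ?_ ha
    filter_upwards [self_mem_nhdsWithin, hL.eventually_ge_atTop 1] with z hz hLz
    have hz1 : (1 : ℝ) < z := hz
    have hLpos : 0 < L z := lt_of_lt_of_le one_pos hLz
    have hkey := (key z hz1).2
    rw [Real.norm_eq_abs, abs_div, abs_of_pos hLpos]
    rw [div_le_iff₀ hLpos]
    calc |P z - Real.log (F z)| ≤ 2 * K := hkey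
      _ = 2 * K * (L z)⁻¹ * L z := by field_simp
  have t3 : Tendsto (fun z : ℝ =>
      (P z - Real.log (F z)) / L z + Real.log ((z - 1) * F z) / L z + 1)
      (𝓝[>] (1 : ℝ)) (𝓝 1) := by
    have := (t2.add t1).add tendsto_const_nhds (b := (1 : ℝ))
    simpa using this
  refine Tendsto.congr' ?_ t3
  filter_upwards [self_mem_nhdsWithin, hL.eventually_ge_atTop 1] with z hz hLz
  have hz1 : (1 : ℝ) < z := hz
  have hLpos : 0 < L z := lt_of_lt_of_le one_pos hLz
  have hF1 := (key z hz1).1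
  have hFpos : 0 < F z := lt_of_lt_of_le one_pos hF1
  have hz0 : (0 : ℝ) < z - 1 := by linarith
  have hlogmul : Real.log ((z - 1) * F z) = Real.log (z - 1) + Real.log (F z) :=
    Real.log_mul hz0.ne' hFpos.ne'
  have hLval : L z = -Real.log (z - 1) := by
    rw [hLdef]
    show Real.log (1 / (z - 1)) = _
    rw [one_div, Real.log_inv]
  have hlogne : Real.log (z - 1) ≠ 0 := by
    intro h
    rw [hLval, h] at hLpos
    simp at hLpos
  show (P z - Real.log (F z)) / L z + Real.log ((z - 1) * F z) / L z + 1 = P z / L z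
  rw [hlogmul, hLval, ← add_div]
  have hnum : P z - Real.log (F z) + (Real.log (z - 1) + Real.log (F z))
      = P z + Real.log (z - 1) := by ring
  rw [hnum]
  have hne : -Real.log (z - 1) ≠ 0 := neg_ne_zero.mpr hlogne
  field_simp
  ring
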